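/- Assume the semigroup action (S,X) is F-asymptotically compact and that the set {t•c : t ∈ A, c ∈ C} is connected whenever C ⊆ X is connected and A ∈ F. If Y ⊆ X is nonempty and bounded and there exists a connected set C ⊇ Y that is F-attracted by ω(Y,F), then ω(Y,F) is connected. -/

import Mathlib

open Filter Set Metric Bornology Topology

universe u v

/-- A relation making the index of a net directed (reflexive, transitive, directed). -/
def DirectedLE {ι : Type*} (le : ι → ι → Prop) : Prop :=
  (∀ i, le i i) ∧ (∀ i j k, le i j → le j k → le i k) ∧ ∀ i j, ∃ k, le i k ∧ le j k

/-- Convergence of a net (indexed by `ι` with order `le`) to a filter: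
for every member `V` of the filter, eventually the net lies in `V`. -/
def NetTendsto {ι : Type*} {α : Type*} (le : ι → ι → Prop) (u : ι → α) (L : Filter α) : Prop :=
  ∀ V ∈ L, ∃ i₀, ∀ i, le i₀ i → u i ∈ V

/-- A point is a cluster point of a net, i.e. some subnet converges to it. -/
def NetClusterPt {ι : Type*} {α : Type*} [TopologicalSpace α] (le : ι → ι → Prop)
    (u : ι → α) (p : α) : Prop :=
  ∀ V ∈ nhds p, ∀ i₀, ∃ i, le i₀ i ∧ u i ∈ V

variable {S : Type u} {X : Type v}

/-- `Y` F-attracts `Z`: for every `ε > 0` there is `A ∈ F` with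
`dist (t • z, Y) < ε` for all `t ∈ A`, `z ∈ Z`. -/
def FAttracts [MetricSpace X] (φ : S → X → X) (F : Filter S) (Y Z : Set X) : Prop :=
  ∀ ε : ℝ, 0 < ε → ∃ A ∈ F, ∀ t ∈ A, ∀ z ∈ Z, Metric.infDist (φ t z) Y < ε

/-- `Y` F-absorbs `Z`: there is `A ∈ F` with `t • z ∈ Y` for all `t ∈ A`, `z ∈ Z`. -/
def FAbsorbs (φ : S → X → X) (F : Filter S) (Y Z : Set X) : Prop :=
  ∃ A ∈ F, ∀ t ∈ A, ∀ z ∈ Z, φ t z ∈ Y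

/-- `Y` is invariant: `s • Y = Y` for every `s`. -/
def SInvariant (φ : S → X → X) (Y : Set X) : Prop :=
  ∀ s : S, φ s '' Y = Y

/-- Global F-attractor: nonempty, compact, invariant, attracts every bounded set. -/
def FGlobalAttractor [MetricSpace X] (φ : S → X → X) (F : Filter S) (A : Set X) : Prop :=
  A.Nonempty ∧ IsCompact A ∧ SInvariant φ A ∧
    ∀ Z : Set X, Bornology.IsBounded Z → FAttracts φ F A Z

/-- The ω-limit set `ω(Y,F) = ⋂_{A ∈ F} closure {t • y : t ∈ A, y ∈ Y}`. -/
def omegaLim [TopologicalSpace X] (φ : S → X → X) (F : Filter S) (Y : Set X) : Set X :=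
  ⋂ A ∈ F, closure (Set.image2 φ A Y)

/-- The forward F-prolongational limit set `J(x,F)`: points `y` for which there are nets
`(t_λ)` in `S` and `(x_λ)` in `X` over a common directed set with `t_λ →_F ∞`,
`x_λ → x` and `t_λ • x_λ → y`. -/
def FJSet [TopologicalSpace X] (φ : S → X → X) (F : Filter S) (x : X) : Set X :=
  {y | ∃ (ι : Type (max u v)) (le : ι → ι → Prop) (t : ι → S) (z : ι → X),
    Nonempty ι ∧ DirectedLE le ∧ NetTendsto le t F ∧
    NetTendsto le z (nhds x) ∧ NetTendsto le (fun i => φ (t i) (z i)) (nhds y)}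

/-- F-asymptotic compactness: every net `(t_λ • x_λ)` with `(x_λ)` of bounded range
and `t_λ →_F ∞` has a cluster point (a convergent subnet). -/
def FAsympCompact [MetricSpace X] (φ : S → X → X) (F : Filter S) : Prop :=
  ∀ (ι : Type (max u v)) (le : ι → ι → Prop) (t : ι → S) (z : ι → X),
    Nonempty ι → DirectedLE le → Bornology.IsBounded (Set.range z) →
    NetTendsto le t F →
    ∃ p : X, NetClusterPt le (fun i => φ (t i) (z i)) p

/-- F-eventual boundedness: each bounded `Y` has `A ∈ F` with `A • Y` bounded. -/
def FEventuallyBounded [MetricSpace X] (φ : S → X → X) (F : Filter S) : Prop :=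
  ∀ Y : Set X, Bornology.IsBounded Y → ∃ A ∈ F, Bornology.IsBounded (Set.image2 φ A Y)

/-- F-bounded dissipativity: some bounded `D` F-absorbs every bounded subset. -/
def FBoundedDissipative [MetricSpace X] (φ : S → X → X) (F : Filter S) : Prop :=
  ∃ D : Set X, Bornology.IsBounded D ∧
    ∀ Z : Set X, Bornology.IsBounded Z → FAbsorbs φ F D Z

/-- F-point dissipativity: some bounded `D` F-absorbs every singleton. -/
def FPointDissipative [MetricSpace X] (φ : S → X → X) (F : Filter S) : Prop :=
  ∃ D : Set X, Bornology.IsBounded D ∧ ∀ x : X, FAbsorbs φ F D {x}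

/-- Eventual compactness: some `t ∈ S` maps every bounded set to a relatively compact set. -/
def FEventuallyCompact [MetricSpace X] (φ : S → X → X) : Prop :=
  ∃ t : S, ∀ Y : Set X, Bornology.IsBounded Y → IsCompact (closure (φ t '' Y))

/-- F-limit compactness: for every bounded `B` and `ε > 0` there is `A ∈ F` such that
`A • B` is covered by finitely many balls of radius `ε`. -/
def FLimitCompact [MetricSpace X] (φ : S → X → X) (F : Filter S) : Prop :=
  ∀ B : Set X, Bornology.IsBounded B → ∀ ε : ℝ, 0 < ε →
    ∃ A ∈ F, ∃ T : Set X, T.Finite ∧ Set.image2 φ A B ⊆ ⋃ c ∈ T, Metric.ball c ε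

/-- Hypothesis H₁: for all `s ∈ S`, `A ∈ F` there is `B ∈ F` with `s * B ⊆ A`. -/
def HypH1 [Mul S] (F : Filter S) : Prop :=
  ∀ s : S, ∀ A ∈ F, ∃ B ∈ F, (fun b => s * b) '' B ⊆ A

/-- Hypothesis H₃: for all `s ∈ S`, `A ∈ F` there is `B ∈ F` with `B ⊆ A * s`. -/
def HypH3 [Mul S] (F : Filter S) : Prop :=
  ∀ s : S, ∀ A ∈ F, ∃ B ∈ F, B ⊆ (fun a => a * s) '' A

/-- Hypothesis H₄: for all `s ∈ S`, `A ∈ F` there is `B ∈ F` with `B ⊆ s * A`. -/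
def HypH4 [Mul S] (F : Filter S) : Prop :=
  ∀ s : S, ∀ A ∈ F, ∃ B ∈ F, B ⊆ (fun a => s * a) '' A


section Aux

variable {S : Type u} {X : Type v} [MetricSpace X]

lemma omegaLim_aux_nonempty (φ : S → X → X) (F : Filter S) [Filter.NeBot F]
    (hac : FAsympCompact φ F) {Y : Set X} (hYne : Y.Nonempty)
    (hYb : Bornology.IsBounded Y) : (omegaLim φ F Y).Nonempty := by
  classical
  obtain ⟨y₀, hy₀⟩ := hYne
  let ι : Type (max u v) := ULift.{v} {A : Set S // A ∈ F}
  let le : ι → ι → Prop := fun i j => j.down.1 ⊆ i.down.1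
  have hdir : DirectedLE le :=
    ⟨fun i => subset_rfl, fun _ _ _ h1 h2 => h2.trans h1,
      fun i j => ⟨⟨⟨i.down.1 ∩ j.down.1, F.inter_mem i.down.2 j.down.2⟩⟩,
        Set.inter_subset_left, Set.inter_subset_right⟩⟩
  have hne : Nonempty ι := ⟨⟨⟨Set.univ, Filter.univ_mem⟩⟩⟩
  let t : ι → S := fun i => (Filter.nonempty_of_mem i.down.2).choose
  have ht : ∀ i, t i ∈ i.down.1 := fun i => (Filter.nonempty_of_mem i.down.2).choose_spec
  have htend : NetTendsto le t F := fun V hV => ⟨⟨⟨V, hV⟩⟩, fun i hi => hi (ht i)⟩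
  have hb : Bornology.IsBounded (Set.range fun _ : ι => y₀) :=
    hYb.subset (Set.range_subset_iff.2 fun _ => hy₀)
  obtain ⟨p, hp⟩ := hac ι le t (fun _ => y₀) hne hdir hb htend
  refine ⟨p, Set.mem_iInter₂.2 fun A hA => ?_⟩
  rw [mem_closure_iff_nhds]
  intro U hU
  obtain ⟨i, hle, hmem⟩ := hp U hU ⟨⟨A, hA⟩⟩
  exact ⟨_, hmem, Set.mem_image2_of_mem (hle (ht i)) hy₀⟩

lemma omegaLim_aux_seqCompact (φ : S → X → X) (F : Filter S) [Filter.NeBot F]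
    (hac : FAsympCompact φ F) {Y : Set X}
    (hYb : Bornology.IsBounded Y) : IsSeqCompact (omegaLim φ F Y) := by
  classical
  intro x hx
  let ι : Type (max u v) := ULift.{v} (ℕ × {A : Set S // A ∈ F})
  let le : ι → ι → Prop := fun i j => i.down.1 ≤ j.down.1 ∧ j.down.2.1 ⊆ i.down.2.1
  have hdir : DirectedLE le :=
    ⟨fun i => ⟨le_rfl, subset_rfl⟩,
      fun _ _ _ h1 h2 => ⟨h1.1.trans h2.1, h2.2.trans h1.2⟩,
      fun i j => ⟨⟨⟨max i.down.1 j.down.1,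
        ⟨i.down.2.1 ∩ j.down.2.1, F.inter_mem i.down.2.2 j.down.2.2⟩⟩⟩,
        ⟨le_max_left _ _, Set.inter_subset_left⟩,
        ⟨le_max_right _ _, Set.inter_subset_right⟩⟩⟩
  have hne : Nonempty ι := ⟨⟨⟨0, ⟨Set.univ, Filter.univ_mem⟩⟩⟩⟩
  have h : ∀ i : ι, ∃ s : S, ∃ y : X, s ∈ i.down.2.1 ∧ y ∈ Y ∧
      dist (φ s y) (x i.down.1) < 1 / (i.down.1 + 1) := by
    intro i
    have hxc : x i.down.1 ∈ closure (Set.image2 φ i.down.2.1 Y) := by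
      have := hx i.down.1
      rw [omegaLim, Set.mem_iInter₂] at this
      exact this i.down.2.1 i.down.2.2
    have hpos : (0 : ℝ) < 1 / (i.down.1 + 1) := by positivity
    obtain ⟨b, hb, hdb⟩ := Metric.mem_closure_iff.1 hxc _ hpos
    obtain ⟨s, hs, y, hy, rfl⟩ := hb
    exact ⟨s, y, hs, hy, by rwa [dist_comm]⟩
  choose t z h1 h2 h3 using h
  have hb : Bornology.IsBounded (Set.range z) :=
    hYb.subset (Set.range_subset_iff.2 fun i => h2 i)
  have htend : NetTendsto le t F := fun V hV =>
    ⟨⟨⟨0, ⟨V, hV⟩⟩⟩, fun i hi => hi.2 (h1 i)⟩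
  obtain ⟨p, hp⟩ := hac ι le t z hne hdir hb htend
  have hpω : p ∈ omegaLim φ F Y := by
    refine Set.mem_iInter₂.2 fun A hA => ?_
    rw [mem_closure_iff_nhds]
    intro U hU
    obtain ⟨i, hle, hmem⟩ := hp U hU ⟨⟨0, ⟨A, hA⟩⟩⟩
    exact ⟨_, hmem, Set.mem_image2_of_mem (hle.2 (h1 i)) (h2 i)⟩
  have hcl : MapClusterPt p atTop x := by
    rw [mapClusterPt_iff_frequently]
    intro s hs
    obtain ⟨ε, hε, hball⟩ := Metric.mem_nhds_iff.1 hs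
    rw [Filter.frequently_atTop]
    intro N
    obtain ⟨k, hk⟩ := exists_nat_one_div_lt (half_pos hε)
    set m : ℕ := max N k with hm
    obtain ⟨i, hle, hmem⟩ := hp (Metric.ball p (ε / 2))
      (Metric.ball_mem_nhds p (half_pos hε)) ⟨⟨m, ⟨Set.univ, Filter.univ_mem⟩⟩⟩
    refine ⟨i.down.1, le_trans (le_max_left N k) hle.1, hball ?_⟩
    have h1m : (1 : ℝ) / (i.down.1 + 1) ≤ 1 / (k + 1) := by
      apply one_div_le_one_div_of_le (by positivity)
      have : (k : ℝ) ≤ i.down.1 := by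
        exact_mod_cast le_trans (le_max_right N k) hle.1
      linarith
    have hd1 : dist (x i.down.1) (φ (t i) (z i)) < 1 / (k + 1) :=
      lt_of_lt_of_le (by rw [dist_comm]; exact h3 i) h1m
    have hd2 : dist (φ (t i) (z i)) p < ε / 2 := Metric.mem_ball.1 hmem
    have : dist (x i.down.1) p < ε := by
      calc dist (x i.down.1) p ≤ dist (x i.down.1) (φ (t i) (z i)) +
            dist (φ (t i) (z i)) p := dist_triangle _ _ _
        _ < 1 / (k + 1) + ε / 2 := by linarith
        _ < ε / 2 + ε / 2 := by linarith
        _ = ε := by ring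
    exact Metric.mem_ball.2 this
  obtain ⟨ψ, hψ, hψt⟩ := TopologicalSpace.FirstCountableTopology.tendsto_subseq hcl
  exact ⟨p, hpω, ψ, hψ, hψt⟩

end Aux

/-- connectedness of ω-limit sets. -/
theorem omegaLim_connected
    {S : Type u} {X : Type v} [Semigroup S] [MetricSpace X]
    (φ : S → X → X) (F : Filter S) [Filter.NeBot F]
    (hact : ∀ (s t : S) (x : X), φ (s * t) x = φ s (φ t x))
    (hcont : ∀ s : S, Continuous (φ s))
    (hac : FAsympCompact φ F)
    (hconn : ∀ C : Set X, ∀ A ∈ F, IsConnected C → IsConnected (Set.image2 φ A C))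
    (Y : Set X) (hYne : Y.Nonempty) (hYb : Bornology.IsBounded Y)
    (C : Set X) (hYC : Y ⊆ C) (hC : IsConnected C)
    (hattr : FAttracts φ F (omegaLim φ F Y) C) :
    IsConnected (omegaLim φ F Y) := by
  classical
  set ω := omegaLim φ F Y with hω
  have hωne : ω.Nonempty := omegaLim_aux_nonempty φ F hac hYne hYb
  have hωcl : IsClosed ω := by
    apply isClosed_biInter
    exact fun A _ => isClosed_closure
  have hωcp : IsCompact ω := (omegaLim_aux_seqCompact φ F hac hYb).isCompact
  refine ⟨hωne, ?_⟩
  intro U V hUo hVo hcov hU hV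
  by_contra hcontra
  have hdisj : ω ∩ (U ∩ V) = ∅ := Set.not_nonempty_iff_eq_empty.1 hcontra
  set K₁ : Set X := ω \ V with hK₁
  set K₂ : Set X := ω \ U with hK₂
  have hK₁cp : IsCompact K₁ := hωcp.diff hVo
  have hK₂cp : IsCompact K₂ := hωcp.diff hUo
  have hKd : Disjoint K₁ K₂ := by
    rw [Set.disjoint_left]
    rintro a ⟨haω, haV⟩ ⟨_, haU⟩
    rcases hcov haω with h | h
    · exact haU h
    · exact haV h
  obtain ⟨U', V', hU'o, hV'o, hK₁U', hK₂V', hUV'⟩ :=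
    SeparatedNhds.of_isCompact_isCompact hK₁cp hK₂cp hKd
  have hωsub : ω ⊆ U' ∪ V' := by
    intro a ha
    by_cases haV : a ∈ V
    · have : a ∉ U := fun haU => by
        have : a ∈ ω ∩ (U ∩ V) := ⟨ha, haU, haV⟩
        rw [hdisj] at this; exact this
      exact Or.inr (hK₂V' ⟨ha, this⟩)
    · exact Or.inl (hK₁U' ⟨ha, haV⟩)
  obtain ⟨δ, hδ, hthick⟩ := hωcp.exists_thickening_subset_open (hU'o.union hV'o) hωsub
  obtain ⟨A, hA, hAattr⟩ := hattr δ hδ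
  set D : Set X := Set.image2 φ A C with hD
  have hDconn : IsConnected D := hconn C A hA hC
  have hDsub : D ⊆ U' ∪ V' := by
    rintro _ ⟨s, hs, c, hc, rfl⟩
    exact hthick ((Metric.mem_thickening_iff_infDist_lt hωne).2 (hAattr s hs c hc))
  have hclD : ∀ q ∈ ω, q ∈ closure D := by
    intro q hq
    have hq' := hq
    rw [hω, omegaLim, Set.mem_iInter₂] at hq'
    have : q ∈ closure (Set.image2 φ A Y) := hq' A hA
    exact closure_mono (Set.image2_subset_left hYC) this
  have hmeet : ∀ (W : Set X), IsOpen W → (ω ∩ W).Nonempty → ω ∩ W ⊆ W → (D ∩ W).Nonempty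
    := by
    rintro W hWo ⟨q, hqω, hqW⟩ _
    have := hclD q hqω
    rw [mem_closure_iff_nhds] at this
    obtain ⟨b, hbW, hbD⟩ := this W (hWo.mem_nhds hqW)
    exact ⟨b, hbD, hbW⟩
  have hDU' : (D ∩ U').Nonempty := by
    obtain ⟨q, hqω, hqU⟩ := hU
    have hqK₁ : q ∈ K₁ := by
      refine ⟨hqω, fun hqV => ?_⟩
      have : q ∈ ω ∩ (U ∩ V) := ⟨hqω, hqU, hqV⟩
      rw [hdisj] at this; exact this
    exact hmeet U' hU'o ⟨q, hqω, hK₁U' hqK₁⟩ Set.inter_subset_right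
  have hDV' : (D ∩ V').Nonempty := by
    obtain ⟨q, hqω, hqV⟩ := hV
    have hqK₂ : q ∈ K₂ := by
      refine ⟨hqω, fun hqU => ?_⟩
      have : q ∈ ω ∩ (U ∩ V) := ⟨hqω, hqU, hqV⟩
      rw [hdisj] at this; exact this
    exact hmeet V' hV'o ⟨q, hqω, hK₂V' hqK₂⟩ Set.inter_subset_right
  obtain ⟨b, hbD, hbU', hbV'⟩ := hDconn.2 U' V' hU'o hV'o hDsub hDU' hDV'
  exact Set.disjoint_left.1 hUV' hbU' hbV'
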